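/- (Complexity of the unified MCMC stage, Theorem 5.1) Let S and V be finite nonempty sets, and for each s ∈ S let σ_s be a probability distribution on V. Let p_fail, ε ∈ (0,1) and let w be a positive integer with w > 3 log(2 Σ_{s∈S, v∈V} 1{σ_s(v) > 0} / p_fail) / (ε² min{σ_s(v) : s ∈ S, v ∈ V, σ_s(v) > 0}). For each s ∈ S let ν_s^{(1)}, …, ν_s^{(w)} be i.i.d. V-valued random variables with law σ_s (the families for different s need not be independent), let X_s^{(w)}(v) := Σ_{i=1}^w 1{ν_s^{(i)} = v}, and let X^{(w)}(v) := max_{s∈S} X_s^{(w)}(v). Then with probability at least 1 − p_fail, |Σ_{v∈V} X^{(w)}(v) − w Σ_{v∈V} max_{s∈S} σ_s(v)| ≤ ε w Σ_{v∈V} max_{s∈S} σ_s(v). -/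

import Mathlib

open MeasureTheory ProbabilityTheory
open scoped BigOperators

section Aux
open Real

lemma upper_ineq {ε : ℝ} (h0 : 0 < ε) (h1 : ε ≤ 1) :
    ε + ε^2/3 ≤ (1+ε) * Real.log (1+ε) := by
  have h1ε : (0:ℝ) < 1 + ε := by linarith
  set x : ℝ := (ε + ε^2/3) / (1+ε) with hxdef
  have hx0 : 0 ≤ x := by positivity
  have hxmul : x * (1+ε) = ε + ε^2/3 := div_mul_cancel₀ _ h1ε.ne'
  have hx1 : x ≤ 1 := by
    rw [div_le_one h1ε]; nlinarith
  have hsum : (∑ m ∈ Finset.range 3, x^m/(m.factorial:ℝ)) = 1 + x + x^2/2 := by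
    simp [Finset.sum_range_succ, Nat.factorial]
  have hb := Real.exp_bound' hx0 hx1 (n := 3) (by norm_num)
  rw [hsum] at hb
  have hfac : ((3:ℕ).factorial : ℝ) = 6 := by norm_num [Nat.factorial]
  rw [hfac] at hb
  have hexp : Real.exp x ≤ 1 + x + x^2/2 + x^3*2/9 := by
    push_cast at hb; ring_nf at hb ⊢; linarith
  have h2 : x^2*(1+ε)^2 = (ε+ε^2/3)^2 := by rw [← hxmul]; ring
  have h3 : x^3*(1+ε)^3 = (ε+ε^2/3)^3 := by rw [← hxmul]; ring
  have hP : (ε+ε^2/3)*(1+ε)^2 + (ε+ε^2/3)^2*(1+ε)/2 + 2/9*(ε+ε^2/3)^3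
      ≤ ε*(1+ε)^3 := by
    have h5 : ε^5 ≤ ε^2 := pow_le_pow_of_le_one h0.le h1 (by norm_num)
    have h6 : ε^6 ≤ ε^2 := pow_le_pow_of_le_one h0.le h1 (by norm_num)
    have h33 : (0:ℝ) ≤ ε^3 := by positivity
    have h44 : (0:ℝ) ≤ ε^4 := by positivity
    nlinarith [sq_nonneg ε]
  have key : (x + x^2/2 + x^3*2/9) * (1+ε)^3
      = (ε+ε^2/3)*(1+ε)^2 + (ε+ε^2/3)^2*(1+ε)/2 + 2/9*(ε+ε^2/3)^3 := by
    linear_combination ((1+ε)^2) * hxmul + ((1+ε)/2) * h2 + (2/9) * h3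
  have h6 : (x + x^2/2 + x^3*2/9) * (1+ε)^3 ≤ ε * (1+ε)^3 := by
    rw [key]; linarith
  have hxε : x + x^2/2 + x^3*2/9 ≤ ε := le_of_mul_le_mul_right h6 (pow_pos h1ε 3)
  have hlx : x ≤ Real.log (1+ε) := by
    rw [Real.le_log_iff_exp_le h1ε]; linarith [sq_nonneg x, pow_nonneg hx0 3]
  calc ε + ε^2/3 = x * (1+ε) := hxmul.symm
    _ ≤ Real.log (1+ε) * (1+ε) := mul_le_mul_of_nonneg_right hlx h1ε.le
    _ = (1+ε) * Real.log (1+ε) := by ring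

lemma lower_ineq {ε : ℝ} (h0 : 0 < ε) (h1 : ε < 1) :
    ε^2/3 ≤ (1-ε) * Real.log (1-ε) + ε := by
  have h1ε : (0:ℝ) < 1 - ε := by linarith
  set y : ℝ := (ε - ε^2/3) / (1-ε) with hydef
  have hεy : 0 < ε - ε^2/3 := by nlinarith
  have hy0 : 0 ≤ y := by positivity
  have hymul : y * (1-ε) = ε - ε^2/3 := div_mul_cancel₀ _ h1ε.ne'
  have hsum : (∑ m ∈ Finset.range 3, y^m/(m.factorial:ℝ)) = 1 + y + y^2/2 := by
    simp [Finset.sum_range_succ, Nat.factorial]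
  have hexp : 1 + y + y^2/2 ≤ Real.exp y := by
    have := Real.sum_le_exp_of_nonneg hy0 3
    rwa [hsum] at this
  have h2 : y^2*(1-ε)^2 = (ε-ε^2/3)^2 := by rw [← hymul]; ring
  have hpoly : (1:ℝ)/(1-ε) ≤ 1 + y + y^2/2 := by
    rw [div_le_iff₀ h1ε]
    have key : (1 + y + y^2/2) * (1-ε) * (1-ε) =
        (1-ε)^2 + (ε-ε^2/3)*(1-ε) + (ε-ε^2/3)^2/2 := by
      linear_combination ((1-ε)) * hymul + (1/2) * h2
    have hPP : 1 * (1-ε) ≤ (1-ε)^2 + (ε-ε^2/3)*(1-ε) + (ε-ε^2/3)^2/2 := by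
      nlinarith [sq_nonneg ε, sq_nonneg (ε - ε^2/3)]
    have h7 := hPP.trans_eq key.symm
    exact le_of_mul_le_mul_right (by linarith) h1ε
  have hlog : -Real.log (1-ε) ≤ y := by
    have h5 : Real.log (1/(1-ε)) ≤ y := by
      rw [Real.log_le_iff_le_exp (by positivity)]
      exact hpoly.trans hexp
    rwa [one_div, Real.log_inv] at h5
  nlinarith [mul_le_mul_of_nonneg_right hlog h1ε.le]

end Aux

lemma pair_chernoff {Ω : Type*} [MeasureSpace Ω] [IsProbabilityMeasure (ℙ : Measure Ω)]
    {V : Type*} [MeasurableSpace V] [MeasurableSingletonClass V] [DecidableEq V]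
    {w : ℕ} (ν : Fin w → Ω → V) (hmeas : ∀ i, Measurable (ν i))
    (hindep : iIndepFun ν ℙ)
    (v : V) (p ε : ℝ) (hp : 0 < p) (hp1 : p ≤ 1) (hε0 : 0 < ε) (hε1 : ε < 1)
    (hlaw : ∀ i, ℙ {ω | ν i ω = v} = ENNReal.ofReal p) :
    ℙ {ω | ¬ |(∑ i, if ν i ω = v then (1:ℝ) else 0) - w*p| ≤ ε*(w*p)}
      ≤ ENNReal.ofReal (2 * Real.exp (-(ε^2 * (w*p))/3)) := by
  have hA : ∀ i, MeasurableSet {ω | ν i ω = v} := fun i =>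
    hmeas i (measurableSet_singleton v)
  set Y : Fin w → Ω → ℝ := fun i ω => if ν i ω = v then 1 else 0 with hYdef
  have hYmeas : ∀ i, Measurable (Y i) := fun i =>
    Measurable.ite (hA i) measurable_const measurable_const
  have hYindep : iIndepFun Y ℙ := by
    have hg : Measurable (fun u : V => if u = v then (1:ℝ) else 0) :=
      Measurable.ite (measurableSet_eq) measurable_const measurable_const
    exact hindep.comp (fun _ u => if u = v then (1:ℝ) else 0) (fun _ => hg)
  set X : Ω → ℝ := ∑ i, Y i with hXdef
  have hXapp : ∀ ω, X ω = ∑ i, Y i ω := fun ω => by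
    rw [hXdef]; simp [Finset.sum_apply]
  have hXmeas : Measurable X := by
    have h := Finset.measurable_sum (s := Finset.univ) (f := Y) fun i _ => hYmeas i
    exact (funext hXapp : X = fun ω => ∑ i, Y i ω) ▸ h
  have hX0 : ∀ ω, 0 ≤ X ω := fun ω => by
    rw [hXapp]; exact Finset.sum_nonneg fun i _ => by positivity
  have hXw : ∀ ω, X ω ≤ w := fun ω => by
    rw [hXapp]
    calc ∑ i, Y i ω ≤ ∑ _i : Fin w, (1:ℝ) := by
          refine Finset.sum_le_sum fun i _ => ?_
          by_cases h : ν i ω = v <;> simp [hYdef, h]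
      _ = w := by simp
  -- integrability
  have hint : ∀ t : ℝ, Integrable (fun ω => Real.exp (t * X ω)) ℙ := by
    intro t
    refine Integrable.mono' (integrable_const (Real.exp (|t| * w))) ?_ (ae_of_all _ fun ω => ?_)
    · exact ((hXmeas.const_mul t).exp).aestronglyMeasurable
    · rw [Real.norm_eq_abs, Real.abs_exp, Real.exp_le_exp]
      calc t * X ω ≤ |t| * X ω := mul_le_mul_of_nonneg_right (le_abs_self t) (hX0 ω)
        _ ≤ |t| * w := mul_le_mul_of_nonneg_left (hXw ω) (abs_nonneg t)
  -- mgf of one Bernoulli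
  have hmgf : ∀ (t : ℝ) (i : Fin w), mgf (Y i) ℙ t = 1 + p * (Real.exp t - 1) := by
    intro t i
    have hfun : (fun ω => Real.exp (t * Y i ω)) =
        fun ω => Set.indicator {ω | ν i ω = v} (fun _ => Real.exp t - 1) ω + 1 := by
      funext ω
      by_cases h : ν i ω = v
      · simp [hYdef, h, Set.indicator_of_mem, Set.mem_setOf_eq]
      · simp [hYdef, h, Set.indicator_of_notMem, Set.mem_setOf_eq]
    rw [mgf, hfun, integral_add ((integrable_const (Real.exp t - 1)).indicator (hA i))
      (integrable_const 1), integral_indicator_const _ (hA i), integral_const]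
    simp [hlaw i, ENNReal.toReal_ofReal hp.le]
    simp only [measureReal_def, hlaw i, ENNReal.toReal_ofReal hp.le]
    ring
  -- mgf of the sum
  have hmgfX : ∀ t : ℝ, mgf X ℙ t ≤ Real.exp ((w * p) * (Real.exp t - 1)) := by
    intro t
    rw [hXdef, iIndepFun.mgf_sum hYindep hYmeas Finset.univ]
    calc ∏ i : Fin w, mgf (Y i) ℙ t = ∏ _i : Fin w, (1 + p * (Real.exp t - 1)) := by
          exact Finset.prod_congr rfl fun i _ => hmgf t i
      _ ≤ ∏ _i : Fin w, Real.exp (p * (Real.exp t - 1)) := by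
          refine Finset.prod_le_prod (fun i _ => ?_) (fun i _ => ?_)
          · nlinarith [Real.exp_pos t]
          · linarith [Real.add_one_le_exp (p * (Real.exp t - 1))]
      _ = Real.exp (p * (Real.exp t - 1)) ^ w := by
          rw [Finset.prod_const, Finset.card_univ, Fintype.card_fin]
      _ = Real.exp ((w * p) * (Real.exp t - 1)) := by
          rw [← Real.exp_nat_mul]; ring_nf
  have hwp : 0 ≤ (w:ℝ) * p := by positivity
  -- upper tail
  have hub : ℙ {ω | (1+ε) * (w*p) ≤ X ω} ≤ ENNReal.ofReal (Real.exp (-(ε^2 * (w*p))/3)) := by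
    set t := Real.log (1+ε) with htdef
    have ht : 0 ≤ t := Real.log_nonneg (by linarith)
    have het : Real.exp t = 1 + ε := Real.exp_log (by linarith)
    have h1 := measure_ge_le_exp_mul_mgf (μ := (ℙ : Measure Ω)) (X := X)
      ((1+ε) * (w*p)) ht (hint t)
    have h2 : Real.exp (-t * ((1+ε)*(w*p))) * mgf X ℙ t
        ≤ Real.exp (-(ε^2 * (w*p))/3) := by
      calc Real.exp (-t * ((1+ε)*(w*p))) * mgf X ℙ t
          ≤ Real.exp (-t * ((1+ε)*(w*p))) * Real.exp ((w*p) * (Real.exp t - 1)) := by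
            exact mul_le_mul_of_nonneg_left (hmgfX t) (Real.exp_pos _).le
        _ = Real.exp ((w*p) * (ε - (1+ε) * t)) := by
            rw [← Real.exp_add, het]; ring_nf
        _ ≤ Real.exp (-(ε^2 * (w*p))/3) := by
            rw [Real.exp_le_exp]
            have := upper_ineq hε0 hε1.le
            nlinarith
    have h3 := h1.trans h2
    rw [← ENNReal.ofReal_toReal (measure_ne_top ℙ _)]
    exact ENNReal.ofReal_le_ofReal h3
  -- lower tail
  have hlb : ℙ {ω | X ω ≤ (1-ε) * (w*p)} ≤ ENNReal.ofReal (Real.exp (-(ε^2 * (w*p))/3)) := by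
    set t := Real.log (1-ε) with htdef
    have ht : t ≤ 0 := Real.log_nonpos (by linarith) (by linarith)
    have het : Real.exp t = 1 - ε := Real.exp_log (by linarith)
    have h1 := measure_le_le_exp_mul_mgf (μ := (ℙ : Measure Ω)) (X := X)
      ((1-ε) * (w*p)) ht (hint t)
    have h2 : Real.exp (-t * ((1-ε)*(w*p))) * mgf X ℙ t
        ≤ Real.exp (-(ε^2 * (w*p))/3) := by
      calc Real.exp (-t * ((1-ε)*(w*p))) * mgf X ℙ t
          ≤ Real.exp (-t * ((1-ε)*(w*p))) * Real.exp ((w*p) * (Real.exp t - 1)) := by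
            exact mul_le_mul_of_nonneg_left (hmgfX t) (Real.exp_pos _).le
        _ = Real.exp ((w*p) * (-(1-ε) * t - ε)) := by
            rw [← Real.exp_add, het]; ring_nf
        _ ≤ Real.exp (-(ε^2 * (w*p))/3) := by
            rw [Real.exp_le_exp]
            have := lower_ineq hε0 hε1
            nlinarith
    have h3 := h1.trans h2
    rw [← ENNReal.ofReal_toReal (measure_ne_top ℙ _)]
    exact ENNReal.ofReal_le_ofReal h3
  -- combine
  have hsub : {ω | ¬ |(∑ i, if ν i ω = v then (1:ℝ) else 0) - w*p| ≤ ε*(w*p)}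
      ⊆ {ω | (1+ε) * (w*p) ≤ X ω} ∪ {ω | X ω ≤ (1-ε) * (w*p)} := by
    intro ω hω
    simp only [Set.mem_setOf_eq, not_le] at hω
    have hXω : (∑ i, if ν i ω = v then (1:ℝ) else 0) = X ω := (hXapp ω).symm
    rw [hXω] at hω
    rcases lt_abs.mp hω with h | h
    · left; show (1+ε) * (w*p) ≤ X ω; linarith
    · right; show X ω ≤ (1-ε) * (w*p); linarith
  calc ℙ {ω | ¬ |(∑ i, if ν i ω = v then (1:ℝ) else 0) - w*p| ≤ ε*(w*p)}
      ≤ ℙ ({ω | (1+ε) * (w*p) ≤ X ω} ∪ {ω | X ω ≤ (1-ε) * (w*p)}) := measure_mono hsub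
    _ ≤ ℙ {ω | (1+ε) * (w*p) ≤ X ω} + ℙ {ω | X ω ≤ (1-ε) * (w*p)} := measure_union_le _ _
    _ ≤ ENNReal.ofReal (Real.exp (-(ε^2 * (w*p))/3)) + ENNReal.ofReal (Real.exp (-(ε^2 * (w*p))/3)) :=
        add_le_add hub hlb
    _ = ENNReal.ofReal (2 * Real.exp (-(ε^2 * (w*p))/3)) := by
        rw [← ENNReal.ofReal_add (Real.exp_pos _).le (Real.exp_pos _).le]; ring_nf


theorem stmt7 {S V : Type*} [Fintype S] [Nonempty S] [Fintype V] [Nonempty V]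
    [DecidableEq V] [MeasurableSpace V] [MeasurableSingletonClass V]
    {Ω : Type*} [MeasureSpace Ω] [IsProbabilityMeasure (ℙ : Measure Ω)]
    (σ : S → V → ℝ) (hσ0 : ∀ s v, 0 ≤ σ s v) (hσ1 : ∀ s, ∑ v, σ s v = 1)
    (pfail ε : ℝ) (hpf : pfail ∈ Set.Ioo (0:ℝ) 1) (hε : ε ∈ Set.Ioo (0:ℝ) 1)
    (w : ℕ) (hw : 0 < w)
    (hwbig : (w : ℝ) >
      3 * Real.log (2 * (∑ s : S, ∑ v : V, if 0 < σ s v then (1:ℝ) else 0) / pfail)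
        / (ε ^ 2 * sInf {x : ℝ | ∃ s v, 0 < σ s v ∧ σ s v = x}))
    -- for each s, w i.i.d. samples from σ_s (families for different s need not be independent)
    (ν : S → Fin w → Ω → V) (hmeas : ∀ s i, Measurable (ν s i))
    (hindep : ∀ s, iIndepFun (ν s) ℙ)
    (hlaw : ∀ s i v, ℙ {ω | ν s i ω = v} = ENNReal.ofReal (σ s v)) :
    ℙ {ω |
        |(∑ v, ⨆ s, (∑ i, if ν s i ω = v then (1:ℝ) else 0)) -
            (w : ℝ) * ∑ v, ⨆ s, σ s v|
          ≤ ε * ((w : ℝ) * ∑ v, ⨆ s, σ s v)}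
      ≥ 1 - ENNReal.ofReal pfail := by
  obtain ⟨hpf0, hpf1⟩ := hpf
  obtain ⟨hε0, hε1⟩ := hε
  classical
  -- the count of positive pairs
  set P : Finset (S × V) := Finset.univ.filter (fun sv => 0 < σ sv.1 sv.2) with hPdef
  set N : ℕ := P.card with hNdef
  have hNsum : (∑ s : S, ∑ v : V, if 0 < σ s v then (1:ℝ) else 0) = N := by
    have h1 := Finset.sum_product' (s := Finset.univ) (t := Finset.univ)
      (f := fun s v => if 0 < σ s v then (1:ℝ) else 0)
    rw [← h1, Finset.univ_product_univ, Finset.sum_boole]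
  have hσle1 : ∀ s v, σ s v ≤ 1 := fun s v => by
    rw [← hσ1 s]
    exact Finset.single_le_sum (fun v _ => hσ0 s v) (Finset.mem_univ v)
  have hexists : ∃ sv : S × V, 0 < σ sv.1 sv.2 := by
    by_contra h
    push_neg at h
    have h2 : ∑ v, σ (Classical.arbitrary S) v ≤ 0 :=
      Finset.sum_nonpos fun v _ => h (Classical.arbitrary S, v)
    rw [hσ1] at h2; linarith
  have hN1 : 0 < N := by
    obtain ⟨sv, hsv⟩ := hexists
    exact Finset.card_pos.mpr ⟨sv, Finset.mem_filter.mpr ⟨Finset.mem_univ _, hsv⟩⟩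
  have hNR : (0:ℝ) < N := by exact_mod_cast hN1
  -- minimum positive probability
  set M : Set ℝ := {x : ℝ | ∃ s v, 0 < σ s v ∧ σ s v = x} with hMdef
  have hMfin : M.Finite := by
    apply Set.Finite.subset (Set.finite_range (fun sv : S × V => σ sv.1 sv.2))
    rintro x ⟨s, v, _, rfl⟩
    exact ⟨(s, v), rfl⟩
  have hMne : M.Nonempty := by
    obtain ⟨sv, hsv⟩ := hexists
    exact ⟨σ sv.1 sv.2, sv.1, sv.2, hsv, rfl⟩
  set μm : ℝ := sInf M with hμdef
  have hμmem : μm ∈ M := hMne.csInf_mem hMfin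
  have hμpos : 0 < μm := by
    obtain ⟨s, v, h, e⟩ := hμmem
    rw [← e]; exact h
  have hμle : ∀ s v, 0 < σ s v → μm ≤ σ s v := fun s v h =>
    csInf_le hMfin.bddBelow ⟨s, v, h, rfl⟩
  -- the log bound
  rw [hNsum] at hwbig
  set L : ℝ := Real.log (2 * N / pfail) with hLdef
  have hL : 3 * L < (w:ℝ) * (ε^2 * μm) := by
    have h3 : 3 * L / (ε^2 * μm) < (w:ℝ) := hwbig
    rwa [div_lt_iff₀ (by positivity)] at h3
  have h2N : (0:ℝ) < 2 * N / pfail := div_pos (by linarith) hpf0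
  have hE : Real.exp (-L) = pfail / (2*N) := by
    rw [Real.exp_neg, hLdef, Real.exp_log h2N, inv_div]
  have hnum : ∀ s v, 0 < σ s v →
      2 * Real.exp (-(ε^2 * ((w:ℝ) * σ s v))/3) ≤ pfail / N := by
    intro s v h
    have hμσ := hμle s v h
    have hexpo : -(ε^2 * ((w:ℝ) * σ s v))/3 ≤ -L := by
      have hmul : ε^2 * ((w:ℝ) * μm) ≤ ε^2 * ((w:ℝ) * σ s v) := by
        apply mul_le_mul_of_nonneg_left _ (sq_nonneg ε)
        exact mul_le_mul_of_nonneg_left hμσ (Nat.cast_nonneg w)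
      nlinarith
    have hfin : 2 * (pfail / (2*(N:ℝ))) = pfail / N := by
      field_simp
    calc 2 * Real.exp (-(ε^2 * ((w:ℝ) * σ s v))/3)
        ≤ 2 * Real.exp (-L) :=
          mul_le_mul_of_nonneg_left (Real.exp_le_exp.mpr hexpo) (by norm_num)
      _ = pfail / N := by rw [hE, hfin]
  -- the good events
  set G : S → V → Set Ω := fun s v =>
    {ω | |(∑ i, if ν s i ω = v then (1:ℝ) else 0) - w * σ s v| ≤ ε * (w * σ s v)} with hGdef
  have hGc : ∀ sv : S × V, ℙ (G sv.1 sv.2)ᶜ ≤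
      (if 0 < σ sv.1 sv.2 then ENNReal.ofReal (pfail / N) else 0) := by
    rintro ⟨s, v⟩
    by_cases h : 0 < σ s v
    · rw [if_pos h]
      have hch := pair_chernoff (ν s) (hmeas s) (hindep s) v (σ s v) ε h
        (hσle1 s v) hε0 hε1 (fun i => hlaw s i v)
      have heq : (G s v)ᶜ =
          {ω | ¬ |(∑ i, if ν s i ω = v then (1:ℝ) else 0) - w * σ s v| ≤ ε * (w * σ s v)} := by
        rw [hGdef]
        ext ω
        simp [Set.mem_compl_iff, Set.mem_setOf_eq]
      rw [heq]
      refine hch.trans (ENNReal.ofReal_le_ofReal ?_)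
      exact hnum s v h
    · rw [if_neg h]
      have hz : σ s v = 0 := le_antisymm (not_lt.mp h) (hσ0 s v)
      have hsub : (G s v)ᶜ ⊆ ⋃ i : Fin w, {ω | ν s i ω = v} := by
        intro ω hω
        by_contra h'
        simp only [Set.mem_iUnion, not_exists, Set.mem_setOf_eq] at h'
        apply hω
        have hX0 : (∑ i, if ν s i ω = v then (1:ℝ) else 0) = 0 :=
          Finset.sum_eq_zero fun i _ => by simp [h' i]
        simp only [hGdef, Set.mem_setOf_eq, hX0, hz, mul_zero, sub_zero, abs_zero]
        exact le_rfl
      have hnull : ℙ (⋃ i : Fin w, {ω | ν s i ω = v}) = 0 :=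
        measure_iUnion_null fun i => by rw [hlaw s i v, hz]; simp
      exact le_of_eq (measure_mono_null hsub hnull)
  -- union bound
  have hBB : ℙ (⋃ sv : S × V, (G sv.1 sv.2)ᶜ) ≤ ENNReal.ofReal pfail := by
    calc ℙ (⋃ sv : S × V, (G sv.1 sv.2)ᶜ) ≤ ∑' sv : S × V, ℙ (G sv.1 sv.2)ᶜ :=
          measure_iUnion_le _
      _ = ∑ sv : S × V, ℙ (G sv.1 sv.2)ᶜ := tsum_fintype _
      _ ≤ ∑ sv : S × V, (if 0 < σ sv.1 sv.2 then ENNReal.ofReal (pfail / N) else 0) :=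
          Finset.sum_le_sum fun sv _ => hGc sv
      _ = ∑ _sv ∈ P, ENNReal.ofReal (pfail / N) := by
          rw [hPdef, Finset.sum_filter]
      _ = N * ENNReal.ofReal (pfail / N) := by
          rw [Finset.sum_const, ← hNdef, nsmul_eq_mul]
      _ = ENNReal.ofReal pfail := by
          rw [← ENNReal.ofReal_natCast N, ← ENNReal.ofReal_mul (Nat.cast_nonneg N)]
          congr 1
          field_simp
  -- the good event implies the conclusion
  have hgood : ∀ ω, (∀ sv : S × V, ω ∈ G sv.1 sv.2) →
      |(∑ v, ⨆ s, (∑ i, if ν s i ω = v then (1:ℝ) else 0)) - (w:ℝ) * ∑ v, ⨆ s, σ s v|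
        ≤ ε * ((w:ℝ) * ∑ v, ⨆ s, σ s v) := by
    intro ω hω
    have key : ∀ v, |(⨆ s, (∑ i, if ν s i ω = v then (1:ℝ) else 0)) - (w:ℝ) * (⨆ s, σ s v)|
        ≤ ε * ((w:ℝ) * (⨆ s, σ s v)) := by
      intro v
      obtain ⟨s0, hs0⟩ := Finite.exists_max (fun s => σ s v)
      have hbddσ : BddAbove (Set.range fun s => σ s v) := (Set.finite_range _).bddAbove
      have hbddX : BddAbove (Set.range fun s => (∑ i, if ν s i ω = v then (1:ℝ) else 0)) :=
        (Set.finite_range _).bddAbove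
      have hm : (⨆ s, σ s v) = σ s0 v :=
        le_antisymm (ciSup_le hs0) (le_ciSup hbddσ s0)
      have hGsv : ∀ s : S,
          |(∑ i, if ν s i ω = v then (1:ℝ) else 0) - w * σ s v| ≤ ε * (w * σ s v) := by
        intro s
        have := hω (s, v)
        simpa [hGdef, Set.mem_setOf_eq] using this
      have hw0 : (0:ℝ) ≤ w := Nat.cast_nonneg w
      have hub : (⨆ s, (∑ i, if ν s i ω = v then (1:ℝ) else 0))
          ≤ (w:ℝ) * σ s0 v + ε * ((w:ℝ) * σ s0 v) := by
        refine ciSup_le fun s => ?_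
        have h1 := (abs_le.mp (hGsv s)).2
        have h2 : σ s v ≤ σ s0 v := hs0 s
        have h3 : (1+ε) * ((w:ℝ) * σ s v) ≤ (1+ε) * ((w:ℝ) * σ s0 v) := by
          apply mul_le_mul_of_nonneg_left _ (by linarith)
          exact mul_le_mul_of_nonneg_left h2 hw0
        nlinarith
      have hlb : (w:ℝ) * σ s0 v - ε * ((w:ℝ) * σ s0 v)
          ≤ (⨆ s, (∑ i, if ν s i ω = v then (1:ℝ) else 0)) := by
        have h1 := (abs_le.mp (hGsv s0)).1
        calc (w:ℝ) * σ s0 v - ε * ((w:ℝ) * σ s0 v)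
            ≤ (∑ i, if ν s0 i ω = v then (1:ℝ) else 0) := by linarith
          _ ≤ ⨆ s, (∑ i, if ν s i ω = v then (1:ℝ) else 0) := le_ciSup hbddX s0
      rw [hm, abs_le]
      constructor <;> linarith
    have e1 : (∑ v, ⨆ s, (∑ i, if ν s i ω = v then (1:ℝ) else 0)) - (w:ℝ) * ∑ v, ⨆ s, σ s v
        = ∑ v, ((⨆ s, (∑ i, if ν s i ω = v then (1:ℝ) else 0)) - (w:ℝ) * (⨆ s, σ s v)) := by
      rw [Finset.sum_sub_distrib, Finset.mul_sum]
    rw [e1]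
    calc |∑ v, ((⨆ s, (∑ i, if ν s i ω = v then (1:ℝ) else 0)) - (w:ℝ) * (⨆ s, σ s v))|
        ≤ ∑ v, |(⨆ s, (∑ i, if ν s i ω = v then (1:ℝ) else 0)) - (w:ℝ) * (⨆ s, σ s v)| :=
          Finset.abs_sum_le_sum_abs _ _
      _ ≤ ∑ v, ε * ((w:ℝ) * (⨆ s, σ s v)) := Finset.sum_le_sum fun v _ => key v
      _ = ε * ((w:ℝ) * ∑ v, ⨆ s, σ s v) := by
          rw [Finset.mul_sum, Finset.mul_sum]
  -- conclude
  have hsubT : (⋂ sv : S × V, G sv.1 sv.2) ⊆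
      {ω | |(∑ v, ⨆ s, (∑ i, if ν s i ω = v then (1:ℝ) else 0)) -
          (w:ℝ) * ∑ v, ⨆ s, σ s v| ≤ ε * ((w:ℝ) * ∑ v, ⨆ s, σ s v)} :=
    fun ω hω => hgood ω (fun sv => Set.mem_iInter.mp hω sv)
  have hcompl : (⋂ sv : S × V, G sv.1 sv.2)ᶜ = ⋃ sv : S × V, (G sv.1 sv.2)ᶜ :=
    Set.compl_iInter _
  have hBB2 : ℙ (⋂ sv : S × V, G sv.1 sv.2)ᶜ ≤ ENNReal.ofReal pfail := by
    rw [hcompl]; exact hBB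
  rw [ge_iff_le]
  calc 1 - ENNReal.ofReal pfail ≤ 1 - ℙ (⋂ sv : S × V, G sv.1 sv.2)ᶜ :=
        tsub_le_tsub_left hBB2 1
    _ ≤ ℙ (⋂ sv : S × V, G sv.1 sv.2) := by
        rw [tsub_le_iff_right]
        have h1 := measure_union_le (μ := (ℙ : Measure Ω))
          (⋂ sv : S × V, G sv.1 sv.2) (⋂ sv : S × V, G sv.1 sv.2)ᶜ
        rwa [Set.union_compl_self, measure_univ] at h1
    _ ≤ ℙ _ := measure_mono hsubT
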